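/- Let R be the reduced boundary matrix obtained from the dimension-p boundary matrix ∂ of a filtered simplicial complex K₁ ⊆ ⋯ ⊆ Kₙ = K (columns indexed by (p+1)-simplices in filtration order, rows by p-simplices in filtration order). For each nonzero column of R with pivot row corresponding to p-simplex τ and column corresponding to (p+1)-simplex σ, attach the bar [b, d) where b is the minimal index with τ ∈ K_b and d the minimal index with σ ∈ K_d. Then the nonzero columns of R, with these attached bars, form a barcode basis of Z_p(K), assuming H_p(K) = 0. -/

import Mathlib

/-- An abstract simplicial complex on vertex type `V`: a collection of finite
subsets of `V` (the simplices) closed under taking subsets. -/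
structure SimpComplex (V : Type) [DecidableEq V] where
  faces : Set (Finset V)
  down_closed : ∀ s ∈ faces, ∀ t ⊆ s, t ∈ faces

variable {V : Type} [DecidableEq V]

/-- The `p`-simplices of `K` (sets of cardinality `p+1`). -/
def SimpComplex.simplices (K : SimpComplex V) (p : ℕ) : Type :=
  {s : Finset V // s ∈ K.faces ∧ s.card = p + 1}

/-- The `p`-th chain group of `K` with `ℤ/2` coefficients. -/
def SimpComplex.Chain (K : SimpComplex V) (p : ℕ) : Type :=
  K.simplices p →₀ ZMod 2

noncomputable instance (K : SimpComplex V) (p : ℕ) : AddCommGroup (K.Chain p) :=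
  inferInstanceAs (AddCommGroup ((K.simplices p) →₀ ZMod 2))

noncomputable instance (K : SimpComplex V) (p : ℕ) : Module (ZMod 2) (K.Chain p) :=
  inferInstanceAs (Module (ZMod 2) ((K.simplices p) →₀ ZMod 2))

/-- The sum of the facets ((p)-dimensional faces) of a `(p+1)`-simplex. -/
noncomputable def SimpComplex.facetSum (K : SimpComplex V) (p : ℕ)
    (σ : K.simplices (p + 1)) : K.Chain p :=
  ∑ v ∈ σ.1.attach,
    Finsupp.single
      ⟨σ.1.erase v.1,
        K.down_closed _ σ.2.1 _ (Finset.erase_subset _ _),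
        by rw [Finset.card_erase_of_mem v.2, σ.2.2]; rfl⟩ (1 : ZMod 2)

/-- The boundary map `∂_p : C_p(K) → C_{p-1}(K)`, extended linearly from
simplices; `∂_0` is the zero map. -/
noncomputable def SimpComplex.boundary (K : SimpComplex V) :
    ∀ p : ℕ, K.Chain p →ₗ[ZMod 2] K.Chain (p - 1)
  | 0 => 0
  | (q + 1) => Finsupp.linearCombination (ZMod 2) (K.facetSum q)


/-- The space of `p`-cycles `Z_p(K) = ker ∂_p`. -/
noncomputable def SimpComplex.cycles (K : SimpComplex V) (p : ℕ) :
    Submodule (ZMod 2) (K.Chain p) :=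
  LinearMap.ker (K.boundary p)

/-- The space of `p`-boundaries `B_p(K) = im ∂_{p+1}`. -/
noncomputable def SimpComplex.boundaries (K : SimpComplex V) (p : ℕ) :
    Submodule (ZMod 2) (K.Chain p) :=
  LinearMap.range (K.boundary (p + 1))

/-- The cycles of the subcomplex with faces `S`, viewed inside `C_p(K)`:
chains supported on `S` with vanishing boundary. -/
noncomputable def SimpComplex.cyclesOf (K : SimpComplex V) (S : Set (Finset V))
    (p : ℕ) : Submodule (ZMod 2) (K.Chain p) :=
  Finsupp.supported (ZMod 2) (ZMod 2) {σ : K.simplices p | σ.1 ∈ S} ⊓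
    LinearMap.ker (K.boundary p)

/-- The boundaries of the subcomplex with faces `S`, viewed inside `C_p(K)`:
boundaries of `(p+1)`-chains supported on `S`. -/
noncomputable def SimpComplex.boundariesOf (K : SimpComplex V)
    (S : Set (Finset V)) (p : ℕ) : Submodule (ZMod 2) (K.Chain p) :=
  (Finsupp.supported (ZMod 2) (ZMod 2)
    {τ : K.simplices (p + 1) | τ.1 ∈ S}).map (K.boundary (p + 1))

/-- The chain corresponding to a column vector, via an ordering `e0` of the
`p`-simplices. -/
noncomputable def toChain (K : SimpComplex V) (p n0 : ℕ)
    (e0 : Fin n0 ≃ K.simplices p) (v : Fin n0 → ZMod 2) : K.Chain p :=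
  ∑ i, Finsupp.single (e0 i) (v i)

/-- The pivot of a column vector over `ℤ/2`: the largest row index with a
nonzero entry (`⊥` for the zero column). -/
def pivot {r : ℕ} (v : Fin r → ZMod 2) : WithBot (Fin r) :=
  (Finset.univ.filter fun i => v i ≠ 0).max

/-- One column operation: add column `mv.1` to column `mv.2`. -/
def applyMove {m r : ℕ} (C : Fin m → Fin r → ZMod 2) (mv : Fin m × Fin m) :
    Fin m → Fin r → ZMod 2 :=
  Function.update C mv.2 (C mv.2 + C mv.1)

/-- A matrix (given by its columns) is reduced if its nonzero columns have
pairwise distinct pivots. -/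
def Reduced {m r : ℕ} (C : Fin m → Fin r → ZMod 2) : Prop :=
  ∀ j j', j ≠ j' → C j ≠ 0 → C j' ≠ 0 → pivot (C j) ≠ pivot (C j')

/-- A valid execution of the standard left-to-right column reduction. -/
inductive ValidTrace {m r : ℕ} :
    (Fin m → Fin r → ZMod 2) → List (Fin m × Fin m) →
      (Fin m → Fin r → ZMod 2) → Prop
  | nil (C : Fin m → Fin r → ZMod 2) : ValidTrace C [] C
  | cons {C R : Fin m → Fin r → ZMod 2} {i j : Fin m} {L : List (Fin m × Fin m)}
      (hlt : i < j)
      (hpiv : pivot (C i) = pivot (C j))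
      (hne : pivot (C j) ≠ ⊥)
      (hmono : ∀ mv ∈ L, j ≤ mv.2)
      (htail : ValidTrace (applyMove C (i, j)) L R) :
      ValidTrace C ((i, j) :: L) R


section AuxPivot

lemma pivot_eq_bot_iff {r : ℕ} (v : Fin r → ZMod 2) : pivot v = ⊥ ↔ v = 0 := by
  rw [pivot, Finset.max_eq_bot, Finset.filter_eq_empty_iff]
  constructor
  · intro h; funext i
    by_contra hi
    exact h (Finset.mem_univ i) hi
  · intro h i _
    simp [h]

lemma le_pivot {r : ℕ} {v : Fin r → ZMod 2} {i : Fin r} (h : v i ≠ 0) :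
    (i : WithBot (Fin r)) ≤ pivot v :=
  Finset.le_max (by simp [h])

lemma pivot_spec {r : ℕ} {v : Fin r → ZMod 2} {i : Fin r}
    (h : pivot v = (i : WithBot (Fin r))) : v i ≠ 0 := by
  have := Finset.mem_of_max h
  simpa using this

lemma eq_zero_of_pivot_lt {r : ℕ} {v : Fin r → ZMod 2} {i : Fin r}
    (h : pivot v < (i : WithBot (Fin r))) : v i = 0 := by
  by_contra h'
  exact absurd (le_pivot h') (not_le.mpr h)

lemma pivot_key {ι : Type*} {r : ℕ} (w : ι → Fin r → ZMod 2) (a : ι → ZMod 2)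
    (S : Finset ι) (hne : S.Nonempty)
    (ha : ∀ k ∈ S, a k ≠ 0) (hw : ∀ k ∈ S, w k ≠ 0)
    (hinj : ∀ k ∈ S, ∀ l ∈ S, pivot (w k) = pivot (w l) → k = l) :
    ∃ k0 ∈ S, ∃ p0 : Fin r, pivot (w k0) = (p0 : WithBot (Fin r)) ∧
      (∀ k ∈ S, pivot (w k) ≤ (p0 : WithBot (Fin r))) ∧
      (∑ k ∈ S, a k • w k) p0 ≠ 0 := by
  classical
  obtain ⟨k0, hk0S, hmax⟩ := S.exists_max_image (fun k => pivot (w k)) hne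
  have hbot : pivot (w k0) ≠ ⊥ := by
    rw [Ne, pivot_eq_bot_iff]; exact hw k0 hk0S
  obtain ⟨p0, hp0⟩ := WithBot.ne_bot_iff_exists.mp hbot
  refine ⟨k0, hk0S, p0, hp0.symm, fun k hk => hp0 ▸ hmax k hk, ?_⟩
  have hval : (∑ k ∈ S, a k • w k) p0 = ∑ k ∈ S, a k * w k p0 := by
    simp [Finset.sum_apply]
  rw [hval, Finset.sum_eq_single k0]
  · exact mul_ne_zero (ha k0 hk0S) (pivot_spec hp0.symm)
  · intro k hk hkk0
    have hlt : pivot (w k) < (p0 : WithBot (Fin r)) := by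
      rw [hp0]
      exact lt_of_le_of_ne (hmax k hk) (fun h => hkk0 (hinj k hk k0 hk0S h))
    rw [eq_zero_of_pivot_lt hlt, mul_zero]
  · intro h; exact absurd hk0S h

end AuxPivot

section AuxTrace

lemma ValidTrace.span_Iic {m r : ℕ} {C R : Fin m → Fin r → ZMod 2}
    {L : List (Fin m × Fin m)} (h : ValidTrace C L R) (j : Fin m) :
    Submodule.span (ZMod 2) (C '' {k | k ≤ j}) =
      Submodule.span (ZMod 2) (R '' {k | k ≤ j}) := by
  induction h with
  | nil C => rfl
  | @cons C R i j0 L hlt hpiv hne hmono htail ih =>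
    rw [← ih]
    set C' := applyMove C (i, j0) with hC'
    have hCk : ∀ k, k ≠ j0 → C' k = C k := fun k hk => Function.update_of_ne hk _ _
    have hCj0 : C' j0 = C j0 + C i := Function.update_self _ _ _
    have hself : ∀ v : Fin r → ZMod 2, v + v = 0 := by
      intro v; funext x; exact CharTwo.add_self_eq_zero _
    apply le_antisymm <;> rw [Submodule.span_le] <;> rintro x ⟨k, hk, rfl⟩
    · by_cases hkj : k = j0
      · subst hkj
        have hij : i ≤ j := le_of_lt (lt_of_lt_of_le hlt hk)
        have : C k = C' k + C' i := by
          rw [hCj0, hCk i (ne_of_lt hlt), add_assoc, hself, add_zero]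
        rw [this]
        exact Submodule.add_mem _
          (Submodule.subset_span ⟨k, hk, rfl⟩)
          (Submodule.subset_span ⟨i, hij, rfl⟩)
      · rw [← hCk k hkj]
        exact Submodule.subset_span ⟨k, hk, rfl⟩
    · by_cases hkj : k = j0
      · subst hkj
        have hij : i ≤ j := le_of_lt (lt_of_lt_of_le hlt hk)
        rw [hCj0]
        exact Submodule.add_mem _
          (Submodule.subset_span ⟨k, hk, rfl⟩)
          (Submodule.subset_span ⟨i, hij, rfl⟩)
      · rw [hCk k hkj]
        exact Submodule.subset_span ⟨k, hk, rfl⟩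

end AuxTrace
section AuxChain

variable {V : Type} [DecidableEq V]

/-- View a chain as a finitely-supported function. -/
noncomputable def cF {K : SimpComplex V} {p : ℕ} (c : K.Chain p) :
    K.simplices p →₀ ZMod 2 := c

lemma chain_ext {K : SimpComplex V} {p : ℕ} {x y : K.Chain p}
    (h : ∀ σ, cF x σ = cF y σ) : x = y := Finsupp.ext h

lemma cF_add {K : SimpComplex V} {p : ℕ} (x y : K.Chain p) :
    cF (x + y) = cF x + cF y := rfl

lemma cF_smul {K : SimpComplex V} {p : ℕ} (a : ZMod 2) (x : K.Chain p) :
    cF (a • x) = a • cF x := rfl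

lemma cF_zero {K : SimpComplex V} {p : ℕ} : cF (0 : K.Chain p) = 0 := rfl

lemma toChain_apply (K : SimpComplex V) (p n0 : ℕ) (e0 : Fin n0 ≃ K.simplices p)
    (v : Fin n0 → ZMod 2) (σ : K.simplices p) :
    cF (toChain K p n0 e0 v) σ = v (e0.symm σ) := by
  classical
  show (∑ i, Finsupp.single (e0 i) (v i) : K.simplices p →₀ ZMod 2) σ = v (e0.symm σ)
  rw [Finsupp.finset_sum_apply]
  simp only [Finsupp.single_apply]
  simp_rw [Equiv.apply_eq_iff_eq_symm_apply]
  rw [Finset.sum_ite_eq' Finset.univ (e0.symm σ) v]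
  simp

/-- `toChain` as a linear map. -/
noncomputable def toChainL (K : SimpComplex V) (p n0 : ℕ)
    (e0 : Fin n0 ≃ K.simplices p) : (Fin n0 → ZMod 2) →ₗ[ZMod 2] K.Chain p where
  toFun v := toChain K p n0 e0 v
  map_add' v w := by
    apply chain_ext
    intro σ
    rw [cF_add, Finsupp.add_apply, toChain_apply, toChain_apply, toChain_apply]
    rfl
  map_smul' a v := by
    apply chain_ext
    intro σ
    rw [RingHom.id_apply, cF_smul, Finsupp.smul_apply, toChain_apply, toChain_apply]
    rfl

lemma toChainL_apply (K : SimpComplex V) (p n0 : ℕ) (e0 : Fin n0 ≃ K.simplices p)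
    (v : Fin n0 → ZMod 2) : toChainL K p n0 e0 v = toChain K p n0 e0 v := rfl

lemma toChainL_injective (K : SimpComplex V) (p n0 : ℕ) (e0 : Fin n0 ≃ K.simplices p) :
    LinearMap.ker (toChainL K p n0 e0) = ⊥ := by
  rw [LinearMap.ker_eq_bot']
  intro v hv
  funext x
  have h2 : cF (toChainL K p n0 e0 v) (e0 x) = cF (0 : K.Chain p) (e0 x) := by rw [hv]
  rw [toChainL_apply, toChain_apply, cF_zero] at h2
  simpa using h2

end AuxChain
section AuxBoundary

variable {V : Type} [DecidableEq V]

lemma chain_add_self {K : SimpComplex V} {p : ℕ} (x : K.Chain p) : x + x = 0 := by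
  apply chain_ext
  intro σ
  rw [cF_add, Finsupp.add_apply, cF_zero]
  exact CharTwo.add_self_eq_zero _

lemma cF_sum {K : SimpComplex V} {p : ℕ} {α : Type*} (s : Finset α) (f : α → K.Chain p) :
    cF (∑ x ∈ s, f x) = ∑ x ∈ s, cF (f x) := rfl

lemma toChain_B (K : SimpComplex V) (p n0 n1 : ℕ) (e0 : Fin n0 ≃ K.simplices p)
    (e1 : Fin n1 ≃ K.simplices (p + 1)) (B : Fin n1 → Fin n0 → ZMod 2)
    (hB : ∀ j i, B j i = if (e0 i).1 ⊆ (e1 j).1 then 1 else 0) (j : Fin n1) :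
    toChain K p n0 e0 (B j) = K.facetSum p (e1 j) := by
  classical
  apply chain_ext
  intro σ
  rw [toChain_apply, hB]
  simp only [Equiv.apply_symm_apply]
  rw [SimpComplex.facetSum]
  erw [cF_sum]
  rw [Finsupp.finset_sum_apply]
  have hterm : ∀ v : {a // a ∈ (e1 j).1},
      cF (Finsupp.single
        (⟨(e1 j).1.erase v.1,
          K.down_closed _ (e1 j).2.1 _ (Finset.erase_subset _ _),
          by rw [Finset.card_erase_of_mem v.2, (e1 j).2.2]; rfl⟩ : K.simplices p)
        (1 : ZMod 2)) σ
        = if (e1 j).1.erase v.1 = σ.1 then 1 else 0 := by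
    intro v
    show (Finsupp.single _ (1 : ZMod 2)) σ = _
    erw [Finsupp.single_apply]
    by_cases h : (e1 j).1.erase v.1 = σ.1
    · rw [if_pos h]; exact if_pos (Subtype.ext h)
    · rw [if_neg h]; exact if_neg (fun hc => h (congrArg Subtype.val hc))
  rw [Finset.sum_congr rfl fun v _ => hterm v]
  rw [Finset.sum_attach ((e1 j).1) (fun a => if (e1 j).1.erase a = σ.1 then (1 : ZMod 2) else 0)]
  by_cases hsub : σ.1 ⊆ (e1 j).1
  · rw [if_pos hsub]
    have hfil : (e1 j).1.filter (fun a => (e1 j).1.erase a = σ.1) = (e1 j).1 \ σ.1 := by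
      ext a
      simp only [Finset.mem_filter, Finset.mem_sdiff]
      constructor
      · rintro ⟨ha, he⟩
        refine ⟨ha, fun hmem => ?_⟩
        rw [← he] at hmem
        exact (Finset.notMem_erase a _) hmem
      · rintro ⟨ha, hna⟩
        refine ⟨ha, ?_⟩
        have hsub2 : σ.1 ⊆ (e1 j).1.erase a := Finset.subset_erase.mpr ⟨hsub, hna⟩
        have hcard : ((e1 j).1.erase a).card ≤ σ.1.card := by
          rw [Finset.card_erase_of_mem ha, (e1 j).2.2, σ.2.2]
          omega
        exact (Finset.eq_of_subset_of_card_le hsub2 hcard).symm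
    rw [Finset.sum_boole, hfil, Finset.card_sdiff_of_subset hsub, (e1 j).2.2, σ.2.2]
    norm_num
  · rw [if_neg hsub]
    symm
    apply Finset.sum_eq_zero
    intro a ha
    rw [if_neg]
    intro he
    exact hsub (he ▸ Finset.erase_subset a (e1 j).1)

end AuxBoundary
section AuxDD

variable {V : Type} [DecidableEq V]

lemma boundary_succ (K : SimpComplex V) (q : ℕ) :
    K.boundary (q + 1) = Finsupp.linearCombination (ZMod 2) (K.facetSum q) := rfl

lemma single_pair_cancel {K : SimpComplex V} {q : ℕ} (x y : K.simplices q) (h : x.1 = y.1) :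
    (Finsupp.single x (1 : ZMod 2) : K.Chain q) + Finsupp.single y 1 = 0 := by
  have hxy : x = y := Subtype.ext h
  rw [hxy]
  exact chain_add_self _

lemma boundary_facetSum (K : SimpComplex V) (p : ℕ) (σ : K.simplices (p + 1)) :
    K.boundary p (K.facetSum p σ) = 0 := by
  classical
  cases p with
  | zero =>
    show (0 : K.Chain 0 →ₗ[ZMod 2] K.Chain (0 - 1)) (K.facetSum 0 σ) = 0
    simp
  | succ q =>
    show Finsupp.linearCombination (ZMod 2) (K.facetSum q) (K.facetSum (q + 1) σ) = 0
    have h1 : K.facetSum (q + 1) σ =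
        ∑ v ∈ σ.1.attach,
          Finsupp.single
            (⟨σ.1.erase v.1,
              K.down_closed _ σ.2.1 _ (Finset.erase_subset _ _),
              by rw [Finset.card_erase_of_mem v.2, σ.2.2]; rfl⟩ : K.simplices (q + 1))
            (1 : ZMod 2) := rfl
    rw [h1]
    erw [map_sum]
    erw [Finset.sum_congr rfl fun v _ => Finsupp.linearCombination_single (ZMod 2) (1 : ZMod 2) _]
    simp only [one_smul]
    unfold SimpComplex.facetSum
    erw [Finset.sum_sigma']
    refine Finset.sum_involution
      (fun x hx =>
        ⟨⟨x.2.1, Finset.mem_of_mem_erase x.2.2⟩,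
         ⟨x.1.1, Finset.mem_erase.mpr ⟨(Finset.ne_of_mem_erase x.2.2).symm, x.1.2⟩⟩⟩)
      ?_ ?_ ?_ ?_
    · intro a ha
      exact single_pair_cancel _ _ Finset.erase_right_comm
    · intro a ha hfa heq
      have := congrArg (fun y => y.1.1) heq
      exact (Finset.ne_of_mem_erase a.2.2) this
    · intro a ha
      simp only [Finset.mem_sigma, Finset.mem_attach, and_self]
    · intro a ha
      obtain ⟨⟨v, hv⟩, ⟨w, hw⟩⟩ := a
      rfl

end AuxDD
section AuxRange

variable {V : Type} [DecidableEq V]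

lemma toChain_zero (K : SimpComplex V) (p n0 : ℕ) (e0 : Fin n0 ≃ K.simplices p) :
    toChain K p n0 e0 0 = 0 :=
  map_zero (toChainL K p n0 e0)

lemma range_boundary (K : SimpComplex V) (p : ℕ) :
    LinearMap.range (K.boundary (p + 1)) =
      Submodule.span (ZMod 2) (Set.range (K.facetSum p)) :=
  Finsupp.range_linearCombination (ZMod 2) (v := K.facetSum p)

end AuxRange
/-- The nonzero columns of the reduced boundary matrix of a filtered
simplicial complex, with bars read off from the pivots, form a barcode basis
of `Z_p(K)`: for every filtration index `i`, the columns born by `i` (pivot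
`p`-simplex entering by time `i`) form a basis of `Z_p(K_i)`, and the columns
dead by `i` (their `(p+1)`-simplex entering by time `i`) form a basis of
`B_p(K_i)`.  Here `H_p(K) = 0` is assumed. -/
theorem reduced_boundary_matrix_barcode_basis
    (K : SimpComplex V) (p : ℕ) (nF : ℕ)
    (F : Fin (nF + 1) → SimpComplex V)
    (hmono : ∀ i j : Fin (nF + 1), i ≤ j → (F i).faces ⊆ (F j).faces)
    (hlast : F (Fin.last nF) = K)
    (n0 n1 : ℕ) (e0 : Fin n0 ≃ K.simplices p) (e1 : Fin n1 ≃ K.simplices (p + 1))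
    (entP : K.simplices p → Fin (nF + 1))
    (entP1 : K.simplices (p + 1) → Fin (nF + 1))
    (hentP : ∀ (σ : K.simplices p) (i : Fin (nF + 1)),
      σ.1 ∈ (F i).faces ↔ entP σ ≤ i)
    (hentP1 : ∀ (τ : K.simplices (p + 1)) (i : Fin (nF + 1)),
      τ.1 ∈ (F i).faces ↔ entP1 τ ≤ i)
    (hordP : ∀ x y : Fin n0, x ≤ y → entP (e0 x) ≤ entP (e0 y))
    (hordP1 : ∀ x y : Fin n1, x ≤ y → entP1 (e1 x) ≤ entP1 (e1 y))
    (B : Fin n1 → Fin n0 → ZMod 2)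
    (hB : ∀ j i, B j i = if (e0 i).1 ⊆ (e1 j).1 then 1 else 0)
    (Lmoves : List (Fin n1 × Fin n1)) (R : Fin n1 → Fin n0 → ZMod 2)
    (htrace : ValidTrace B Lmoves R) (hred : Reduced R)
    (hH : LinearMap.ker (K.boundary p) ≤ LinearMap.range (K.boundary (p + 1))) :
    ∃ piv : ∀ j : Fin n1, R j ≠ 0 → Fin n0,
      (∀ (j : Fin n1) (hj : R j ≠ 0), pivot (R j) = (piv j hj : WithBot (Fin n0))) ∧
      LinearIndependent (ZMod 2)
        (fun j : {j : Fin n1 // R j ≠ 0} => toChain K p n0 e0 (R j.1)) ∧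
      ∀ i : Fin (nF + 1),
        Submodule.span (ZMod 2)
            ((fun j : {j : Fin n1 // R j ≠ 0} => toChain K p n0 e0 (R j.1)) ''
              {j | entP (e0 (piv j.1 j.2)) ≤ i}) =
          K.cyclesOf (F i).faces p ∧
        Submodule.span (ZMod 2)
            ((fun j : {j : Fin n1 // R j ≠ 0} => toChain K p n0 e0 (R j.1)) ''
              {j | entP1 (e1 j.1) ≤ i}) =
          K.boundariesOf (F i).faces p := by
  classical
  -- entries about pivots of nonzero columns
  have hRne : ∀ (j : Fin n1), R j ≠ 0 → pivot (R j) ≠ ⊥ := fun j hj => by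
    rw [Ne, pivot_eq_bot_iff]; exact hj
  -- span facts from the trace
  have hspan : ∀ j, Submodule.span (ZMod 2) (B '' {k | k ≤ j}) =
      Submodule.span (ZMod 2) (R '' {k | k ≤ j}) := htrace.span_Iic
  have hRB : ∀ j, R j ∈ Submodule.span (ZMod 2) (B '' {k | k ≤ j}) := fun j => by
    rw [hspan j]; exact Submodule.subset_span ⟨j, le_refl j, rfl⟩
  have hBR : ∀ j, B j ∈ Submodule.span (ZMod 2) (R '' {k | k ≤ j}) := fun j => by
    rw [← hspan j]; exact Submodule.subset_span ⟨j, le_refl j, rfl⟩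
  have himgB : ∀ s : Set (Fin n1), (⇑(toChainL K p n0 e0)) '' (B '' s) =
      (fun k => K.facetSum p (e1 k)) '' s := by
    intro s
    rw [← Set.image_comp]
    exact Set.image_congr' (fun k => toChain_B K p n0 n1 e0 e1 B hB k)
  have himgR : ∀ s : Set (Fin n1), (⇑(toChainL K p n0 e0)) '' (R '' s) =
      (fun k => toChain K p n0 e0 (R k)) '' s := by
    intro s; rw [← Set.image_comp]; rfl
  have hgB : ∀ j, toChain K p n0 e0 (R j) ∈
      Submodule.span (ZMod 2) ((fun k => K.facetSum p (e1 k)) '' {k | k ≤ j}) := fun j => by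
    have h1 := Submodule.apply_mem_span_image_of_mem_span (toChainL K p n0 e0) (hRB j)
    rwa [himgB] at h1
  have hBg : ∀ k, toChain K p n0 e0 (B k) ∈
      Submodule.span (ZMod 2) ((fun m => toChain K p n0 e0 (R m)) '' {m | m ≤ k}) := fun k => by
    have h1 := Submodule.apply_mem_span_image_of_mem_span (toChainL K p n0 e0) (hBR k)
    rwa [himgR] at h1
  have hgKer : ∀ j, toChain K p n0 e0 (R j) ∈ LinearMap.ker (K.boundary p) := fun j => by
    refine Submodule.span_le.mpr ?_ (hgB j)
    rintro x ⟨k, -, rfl⟩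
    exact LinearMap.mem_ker.mpr (boundary_facetSum K p (e1 k))
  have hfacet_eq : ∀ τ : K.simplices (p + 1),
      K.boundary (p + 1) (Finsupp.single τ (1 : ZMod 2)) = K.facetSum p τ := by
    intro τ
    show Finsupp.linearCombination (ZMod 2) (K.facetSum p) (Finsupp.single τ 1) = _
    rw [Finsupp.linearCombination_single, one_smul]
  have hfacetBnd : ∀ (τ : K.simplices (p + 1)) (i : Fin (nF + 1)), entP1 τ ≤ i →
      K.facetSum p τ ∈ K.boundariesOf (F i).faces p := by
    intro τ i hi
    rw [← hfacet_eq τ]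
    exact Submodule.mem_map_of_mem
      (Finsupp.single_mem_supported (ZMod 2) 1 ((hentP1 τ i).mpr hi))
  have hgBnd : ∀ (j : Fin n1) (i : Fin (nF + 1)), entP1 (e1 j) ≤ i →
      toChain K p n0 e0 (R j) ∈ K.boundariesOf (F i).faces p := by
    intro j i hi
    refine Submodule.span_le.mpr ?_ (hgB j)
    rintro x ⟨k, hk, rfl⟩
    exact hfacetBnd (e1 k) i (le_trans (hordP1 k j hk) hi)
  -- the reduced columns span all boundaries of K
  have hrange : LinearMap.range (K.boundary (p + 1)) ≤
      Submodule.span (ZMod 2) (Set.range (fun k : Fin n1 => toChain K p n0 e0 (R k))) := by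
    rw [range_boundary, Submodule.span_le]
    rintro x ⟨τ, rfl⟩
    have hfs : K.facetSum p τ = toChain K p n0 e0 (B (e1.symm τ)) := by
      rw [toChain_B K p n0 n1 e0 e1 B hB, Equiv.apply_symm_apply]
    rw [hfs]
    refine Submodule.span_mono ?_ (hBg (e1.symm τ))
    rintro x ⟨m, -, rfl⟩
    exact ⟨m, rfl⟩
  -- linear independence
  have hLIvec : LinearIndependent (ZMod 2) (fun j : {j : Fin n1 // R j ≠ 0} => R j.1) := by
    rw [Fintype.linearIndependent_iff]
    intro gc hgc
    by_contra hne
    push_neg at hne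
    obtain ⟨j0, hj0⟩ := hne
    set S : Finset {j : Fin n1 // R j ≠ 0} := Finset.univ.filter (fun k => gc k ≠ 0) with hSdef
    have hSne : S.Nonempty := ⟨j0, by simp [hSdef, hj0]⟩
    obtain ⟨k0, hk0, p0, hp0, hmax, hval⟩ := pivot_key (fun k => R k.1) gc S hSne
      (fun k hk => (Finset.mem_filter.mp hk).2) (fun k _ => k.2)
      (fun k _ l _ hpe => by
        by_contra hkl
        exact hred k.1 l.1 (fun h => hkl (Subtype.ext h)) k.2 l.2 hpe)
    have hsum : ∑ k ∈ S, gc k • R k.1 = 0 := by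
      rw [Finset.sum_subset (Finset.subset_univ S) (fun x _ hx => by
        have : gc x = 0 := by
          by_contra hcx
          exact hx (Finset.mem_filter.mpr ⟨Finset.mem_univ x, hcx⟩)
        rw [this, zero_smul])]
      exact hgc
    exact hval (congrFun hsum p0)
  refine ⟨fun j hj => (pivot (R j)).unbot (hRne j hj),
    fun j hj => (WithBot.coe_unbot _ _).symm, ?_, ?_⟩
  · exact hLIvec.map' (toChainL K p n0 e0) (toChainL_injective K p n0 e0)
  intro i
  constructor
  · -- cycles
    apply le_antisymm
    · rw [Submodule.span_le]
      rintro x ⟨j, hj, rfl⟩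
      refine And.intro ?_ (hgKer j.1)
      -- supported
      refine (Finsupp.mem_supported (ZMod 2) _).mpr ?_
      intro σ hσ
      have hσ' : cF (toChain K p n0 e0 (R j.1)) σ ≠ 0 := Finsupp.mem_support_iff.mp hσ
      rw [toChain_apply] at hσ'
      have h1 : ((e0.symm σ : Fin n0) : WithBot (Fin n0)) ≤ pivot (R j.1) := le_pivot hσ'
      have h2 : pivot (R j.1) = ((pivot (R j.1)).unbot (hRne j.1 j.2) : WithBot (Fin n0)) :=
        (WithBot.coe_unbot _ _).symm
      rw [h2, WithBot.coe_le_coe] at h1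
      have h3 : entP (e0 (e0.symm σ)) ≤ i := le_trans (hordP _ _ h1) hj
      rw [Equiv.apply_symm_apply] at h3
      exact (hentP σ i).mpr h3
    · intro z hz
      obtain ⟨hz1, hz2⟩ : _ ∧ _ := hz
      have hzspan : z ∈ Submodule.span (ZMod 2)
          (Set.range (fun k : Fin n1 => toChain K p n0 e0 (R k))) := hrange (hH hz2)
      obtain ⟨c, hc⟩ := Finsupp.mem_span_range_iff_exists_finsupp.mp hzspan
      set S : Finset (Fin n1) := c.support.filter (fun k => R k ≠ 0) with hSdef
      have hzsum : ∑ k ∈ S, c k • toChain K p n0 e0 (R k) = z := by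
        rw [← hc, Finsupp.sum]
        apply Finset.sum_subset (Finset.filter_subset _ _)
        intro x hxs hx
        by_cases hR : R x = 0
        · rw [hR, toChain_zero, smul_zero]
        · exact absurd (Finset.mem_filter.mpr ⟨hxs, hR⟩) hx
      by_cases hSe : S.Nonempty
      · obtain ⟨k0, hk0, p0, hp0, hmax, hval⟩ := pivot_key R c S hSe
          (fun k hk => Finsupp.mem_support_iff.mp (Finset.mem_filter.mp hk).1)
          (fun k hk => (Finset.mem_filter.mp hk).2)
          (fun k hk l hl hpe => by
            by_contra hkl
            exact hred k l hkl (Finset.mem_filter.mp hk).2 (Finset.mem_filter.mp hl).2 hpe)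
        have hVz : cF z (e0 p0) ≠ 0 := by
          rw [← hzsum]
          have hev : cF (∑ k ∈ S, c k • toChain K p n0 e0 (R k)) (e0 p0) =
              (∑ k ∈ S, c k • R k) p0 := by
            rw [cF_sum, Finsupp.finset_sum_apply, Finset.sum_apply]
            apply Finset.sum_congr rfl
            intro k _
            rw [cF_smul, Finsupp.smul_apply, toChain_apply, Equiv.symm_apply_apply,
              Pi.smul_apply]
          rw [hev]
          exact hval
        have hip0 : entP (e0 p0) ≤ i :=
          (hentP _ i).mp ((Finsupp.mem_supported (ZMod 2) _).mp hz1
            (Finsupp.mem_support_iff.mpr hVz))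
        rw [← hzsum]
        apply Submodule.sum_mem
        intro k hk
        have hkR : R k ≠ 0 := (Finset.mem_filter.mp hk).2
        apply Submodule.smul_mem
        apply Submodule.subset_span
        refine ⟨⟨k, hkR⟩, ?_, rfl⟩
        show entP (e0 ((pivot (R k)).unbot (hRne k hkR))) ≤ i
        have h2 : ((pivot (R k)).unbot (hRne k hkR) : WithBot (Fin n0)) ≤
            (p0 : WithBot (Fin n0)) := by
          rw [WithBot.coe_unbot]
          exact hmax k hk
        exact le_trans (hordP _ _ (WithBot.coe_le_coe.mp h2)) hip0
      · rw [Finset.not_nonempty_iff_eq_empty] at hSe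
        rw [hSe, Finset.sum_empty] at hzsum
        rw [← hzsum]
        exact Submodule.zero_mem _
  · -- boundaries
    apply le_antisymm
    · rw [Submodule.span_le]
      rintro x ⟨j, hj, rfl⟩
      exact hgBnd j.1 i hj
    · rintro z hz
      obtain ⟨c, hc, rfl⟩ := Submodule.mem_map.mp hz
      show (∑ τ ∈ (cF c).support, cF c τ • K.facetSum p τ) ∈ _
      apply Submodule.sum_mem
      intro τ hτ
      apply Submodule.smul_mem
      have hτi : entP1 τ ≤ i :=
        (hentP1 τ i).mp ((Finsupp.mem_supported (ZMod 2) _).mp hc hτ)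
      have hfs : K.facetSum p τ = toChain K p n0 e0 (B (e1.symm τ)) := by
        rw [toChain_B K p n0 n1 e0 e1 B hB, Equiv.apply_symm_apply]
      rw [hfs]
      refine Submodule.span_le.mpr ?_ (hBg (e1.symm τ))
      rintro x ⟨m, hm, rfl⟩
      show toChain K p n0 e0 (R m) ∈ _
      by_cases hmR : R m = 0
      · rw [hmR, toChain_zero]
        exact Submodule.zero_mem _
      · apply Submodule.subset_span
        refine ⟨⟨m, hmR⟩, ?_, rfl⟩
        show entP1 (e1 m) ≤ i
        refine le_trans (hordP1 m (e1.symm τ) hm) ?_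
        rw [Equiv.apply_symm_apply]
        exact hτi
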